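/- There is an absolute constant C > 0 such that for every complex λ with Re(λ) > 0 and every positive integer σ, |Σ_{n∈ℤ} (−1)^n e^{−λσn²}| ≤ C |λσ|^{−1/2} (1 + σ/Re(1/λ)) e^{−(π²/(4σ)) Re(1/λ)}. -/

import Mathlib

open Real Complex

lemma aux_inv_one_sub_exp {t : ℝ} (ht : 0 < t) : (1 - rexp (-t))⁻¹ ≤ 1 + 1/t := by
  have h0 : (0:ℝ) < 1 + t := by linarith
  have h1 : rexp (-t) ≤ 1/(1+t) := by
    rw [Real.exp_neg, one_div]
    exact inv_anti₀ h0 (by linarith [Real.add_one_le_exp t])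
  have h2 : t/(1+t) ≤ 1 - rexp (-t) := by
    have : 1 - 1/(1+t) = t/(1+t) := by field_simp; ring
    linarith
  calc (1 - rexp (-t))⁻¹ ≤ (t/(1+t))⁻¹ := inv_anti₀ (by positivity) h2
    _ = 1 + 1/t := by field_simp; ring

lemma aux_theta_norm_bound {z τ : ℂ} (hτ : 0 < τ.im) (hz : z.im = -τ.im/2) :
    ‖jacobiTheta₂ z τ‖ ≤ 3 + 2/(π * τ.im) := by
  set t := π * τ.im with ht_def
  have ht : 0 < t := by positivity
  have he1 : rexp (-t) < 1 := Real.exp_lt_one_iff.mpr (by linarith)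
  have he0 : (0:ℝ) ≤ rexp (-t) := (Real.exp_pos _).le
  set f : ℤ → ℝ := fun n => rexp (-t * ((n:ℝ)^2 - n)) with hf_def
  have hnorm : ∀ n : ℤ, ‖jacobiTheta₂_term n z τ‖ = f n := by
    intro n
    rw [norm_jacobiTheta₂_term, hz, hf_def]
    ring_nf
    rw [ht_def]; ring_nf
  have hgeom : Summable fun n : ℕ => rexp (-t) ^ n := summable_geometric_of_lt_one he0 he1
  have hb1 : ∀ n : ℕ, f ((n+1 : ℕ) : ℤ) ≤ rexp (-t) ^ n := by
    intro n
    rw [hf_def, ← Real.exp_nat_mul]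
    apply Real.exp_le_exp.mpr
    push_cast
    nlinarith [mul_nonneg ht.le (sq_nonneg (n:ℝ)), Nat.cast_nonneg (α := ℝ) n]
  have hb2 : ∀ n : ℕ, f (-((n:ℤ) + 1)) ≤ rexp (-t) ^ n := by
    intro n
    rw [hf_def, ← Real.exp_nat_mul]
    apply Real.exp_le_exp.mpr
    push_cast
    nlinarith [mul_nonneg ht.le (sq_nonneg (n:ℝ)), Nat.cast_nonneg (α := ℝ) n,
      mul_nonneg ht.le (Nat.cast_nonneg (α := ℝ) n)]
  have hfnonneg : ∀ n : ℤ, 0 ≤ f n := fun n => (Real.exp_pos _).le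
  have hsumterm : Summable fun n : ℤ => ‖jacobiTheta₂_term n z τ‖ :=
    (summable_norm_iff.mpr ((summable_jacobiTheta₂_term_iff z τ).mpr hτ))
  have hsumf : Summable f := by
    apply hsumterm.congr; intro n; exact hnorm n
  have hf1 : Summable fun n : ℕ => f n := hsumf.comp_injective (fun a b h => by exact_mod_cast h)
  have hf2 : Summable fun n : ℕ => f (-((n:ℤ) + 1)) :=
    hsumf.comp_injective (fun a b h => by omega)
  have hftail : Summable fun n : ℕ => f ((n+1 : ℕ) : ℤ) := by
    apply Summable.of_nonneg_of_le (fun n => hfnonneg _) hb1 hgeom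
  have hgsum : ∑' n : ℕ, rexp (-t) ^ n = (1 - rexp (-t))⁻¹ :=
    tsum_geometric_of_lt_one he0 he1
  have key : ∑' n : ℤ, f n ≤ 3 + 2/t := by
    rw [tsum_of_nat_of_neg_add_one hf1 hf2]
    have e1 : ∑' n : ℕ, f n = f 0 + ∑' n : ℕ, f ((n+1 : ℕ) : ℤ) := Summable.tsum_eq_zero_add hf1
    have hA : ∑' n : ℕ, f ((n+1 : ℕ) : ℤ) ≤ (1 - rexp (-t))⁻¹ := by
      rw [← hgsum]; exact Summable.tsum_le_tsum hb1 hftail hgeom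
    have hB : ∑' n : ℕ, f (-((n:ℤ) + 1)) ≤ (1 - rexp (-t))⁻¹ := by
      rw [← hgsum]; exact Summable.tsum_le_tsum hb2 hf2 hgeom
    have hf0 : f 0 = 1 := by simp [hf_def]
    have hinv := aux_inv_one_sub_exp ht
    have : (1:ℝ) + 1/t ≤ 1 + 1/t := le_refl _
    calc ∑' n : ℕ, f n + ∑' n : ℕ, f (-((n:ℤ)+1))
        ≤ (1 + (1 - rexp (-t))⁻¹) + (1 - rexp (-t))⁻¹ := by
          rw [e1, hf0]; exact add_le_add (by linarith) hB
      _ ≤ (1 + (1 + 1/t)) + (1 + 1/t) := by linarith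
      _ = 3 + 2/t := by ring
  calc ‖jacobiTheta₂ z τ‖ ≤ ∑' n : ℤ, ‖jacobiTheta₂_term n z τ‖ :=
        norm_tsum_le_tsum_norm hsumterm
    _ = ∑' n : ℤ, f n := tsum_congr hnorm
    _ ≤ 3 + 2/t := key

/-- the theta function bound. -/
theorem theta_bound :
    ∃ C : ℝ, 0 < C ∧ ∀ lam : ℂ, 0 < lam.re → ∀ σ : ℕ, 0 < σ →
      ‖∑' n : ℤ, (-1 : ℂ) ^ n * Complex.exp (-lam * (σ : ℂ) * (n : ℂ) ^ 2)‖ ≤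
        C * ‖lam * (σ : ℂ)‖ ^ (-(1 / 2) : ℝ) * (1 + (σ : ℝ) / (1 / lam).re) *
          Real.exp (-(π ^ 2 / (4 * σ)) * (1 / lam).re) := by
  refine ⟨3 * Real.sqrt π, by positivity, fun lam hlam σ hσ => ?_⟩
  have hπ : (0:ℝ) < π := pi_pos
  have hπc : (π:ℂ) ≠ 0 := Complex.ofReal_ne_zero.mpr pi_ne_zero
  have hσ0 : (0:ℝ) < σ := by exact_mod_cast hσ
  set w : ℂ := lam * σ with hw
  have hwre : 0 < w.re := by
    rw [hw]
    simp only [Complex.mul_re, Complex.natCast_re, Complex.natCast_im, mul_zero, sub_zero]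
    positivity
  have hw0 : w ≠ 0 := fun h => by simp [h] at hwre
  have hwinvre : 0 < w⁻¹.re := by
    rw [Complex.inv_re]
    exact div_pos hwre (Complex.normSq_pos.mpr hw0)
  set τ : ℂ := I * w / π with hτdef
  have hτ0 : τ ≠ 0 := by
    rw [hτdef]
    field_simp [Complex.I_ne_zero, hw0]
    exact div_ne_zero (mul_ne_zero Complex.I_ne_zero hw0) hπc
  have hτim : τ.im = w.re / π := by
    rw [hτdef]
    simp [Complex.div_im, Complex.mul_im, Complex.mul_re, Complex.normSq_ofReal]
    field_simp
  have hτpos : 0 < τ.im := hτim ▸ div_pos hwre hπ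
  -- step 1 : rewrite the sum as jacobiTheta₂
  have hsum_eq : ∑' n : ℤ, (-1 : ℂ) ^ n * Complex.exp (-lam * (σ : ℂ) * (n : ℂ) ^ 2)
      = jacobiTheta₂ (1/2) τ := by
    rw [jacobiTheta₂]
    apply tsum_congr
    intro n
    rw [jacobiTheta₂_term, Complex.exp_add]
    congr 1
    · rw [show 2 * (π:ℂ) * I * n * (1/2) = n * (π * I) by ring, Complex.exp_int_mul,
        Complex.exp_pi_mul_I]
    · congr 1
      rw [hτdef, hw]
      field_simp
      ring_nf
      simp [Complex.I_sq]
  rw [hsum_eq, jacobiTheta₂_functional_equation]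
  rw [norm_mul, norm_mul]
  -- the three factors
  have hfac1 : ‖1 / (-I * τ) ^ (1/2 : ℂ)‖ = Real.sqrt π * ‖w‖ ^ (-(1/2) : ℝ) := by
    have h1 : -I * τ = w / π := by
      rw [hτdef]
      field_simp
      ring_nf
      simp [Complex.I_sq]
    have h2 : ‖((w / (π:ℂ)) ^ (1/2 : ℂ))‖ = (‖w‖ / π) ^ ((1:ℝ)/2) := by
      rw [show (1/2 : ℂ) = (((1:ℝ)/2 : ℝ) : ℂ) by norm_num, Complex.norm_cpow_real,
        norm_div, Complex.norm_of_nonneg hπ.le]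
    rw [h1, norm_div, norm_one, h2,
      Real.div_rpow (norm_nonneg _) hπ.le, Real.sqrt_eq_rpow]
    rw [Real.rpow_neg (norm_nonneg w),
      one_div, inv_div, div_eq_mul_inv]
  have hlamre : 0 < (1/lam).re := by
    rw [one_div, Complex.inv_re]
    exact div_pos hlam (Complex.normSq_pos.mpr (fun h => by simp [h] at hlam))
  have hwinv_eq : w⁻¹.re = (1/lam).re / σ := by
    rw [hw, mul_inv, show ((σ:ℂ))⁻¹ = (((σ:ℝ)⁻¹ : ℝ) : ℂ) by push_cast; ring]
    rw [show lam⁻¹ * (((σ:ℝ)⁻¹ : ℝ) : ℂ) = (((σ:ℝ)⁻¹ : ℝ) : ℂ) * lam⁻¹ by ring,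
      Complex.re_ofReal_mul, one_div]
    field_simp
  have hfac2 : ‖Complex.exp (-π * I * (1/2:ℂ)^2 / τ)‖
      = rexp (-(π^2/(4*σ)) * (1/lam).re) := by
    have h3 : -(π:ℂ) * I * (1/2:ℂ)^2 / τ = ((-(π^2)/4 : ℝ) : ℂ) * w⁻¹ := by
      rw [hτdef]
      field_simp
      ring_nf
      try simp [Complex.I_sq]
      try ring_nf
    rw [h3, Complex.norm_exp, Complex.re_ofReal_mul, hwinv_eq]
    congr 1
    field_simp
  have h4 : (-1/τ) = ((π:ℝ):ℂ) * (I * w⁻¹) := by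
    rw [hτdef]
    field_simp
    ring_nf
    simp [Complex.I_sq]
  have h4im : (-1/τ).im = π * w⁻¹.re := by
    rw [h4, Complex.im_ofReal_mul]
    simp [Complex.mul_im]
  have hτ'pos : 0 < (-1/τ).im := by rw [h4im]; positivity
  have hz'im : ((1/2 : ℂ)/τ).im = -(-1/τ).im/2 := by
    have h5 : (1/2 : ℂ)/τ = ((-(1/2) : ℝ) : ℂ) * (-1/τ) := by push_cast; ring
    rw [h5, Complex.im_ofReal_mul]
    ring
  have hfac3 := aux_theta_norm_bound hτ'pos hz'im
  have hbound : ‖jacobiTheta₂ ((1/2 : ℂ)/τ) (-1/τ)‖ ≤ 3 * (1 + σ/(1/lam).re) := by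
    refine hfac3.trans ?_
    rw [h4im, hwinv_eq]
    set r := (1/lam).re with hr_def
    have h6 : π * (π * (r/σ)) = π^2*r/σ := by ring
    have h7 : 2/(π^2*r/σ) = 2*σ/(π^2*r) := by
      field_simp
    have h8 : 2*σ/(π^2*r) ≤ σ/r := by
      rw [div_le_div_iff₀ (by positivity) hlamre]
      have hπ2 : (9:ℝ) ≤ π^2 := by nlinarith [Real.pi_gt_three]
      nlinarith [mul_nonneg hσ0.le hlamre.le, hπ2]
    have hnn : (0:ℝ) ≤ σ/(1/lam).re := by positivity
    rw [h6, h7]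
    linarith
  rw [hfac1, hfac2]
  refine le_trans (mul_le_mul_of_nonneg_left hbound (by positivity)) (le_of_eq ?_)
  ring
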